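/- An integer n ≥ 1 is simultaneously of the form n = u² + uv + v² with (u,v) ∈ ℤ² and of the form n = x² + y² with (x,y) ∈ ℤ² if and only if there exist integers a, b ≥ 0 and positive integers N_{5,12}, N_{7,12}, N_{11,12}, N_{1,12} — where for each pair (c,12) among (5,12), (7,12), (11,12), (1,12) every prime divisor of N_{c,12} is congruent to c modulo 12 — such that n = (2^a · 3^b · N_{5,12} · N_{7,12} · N_{11,12})² · N_{1,12}. -/

import Mathlib

/-- If q ≡ 2 mod 3 is prime and q ∣ u²+uv+v², then q ∣ u and q ∣ v. -/
lemma key3 (q : ℕ) (hq : q.Prime) (h3 : q % 3 = 2) (u v : ℤ)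
    (h : (q : ℤ) ∣ u ^ 2 + u * v + v ^ 2) : (q : ℤ) ∣ u ∧ (q : ℤ) ∣ v := by
  haveI : Fact q.Prime := ⟨hq⟩
  have hq3 : q ≠ 3 := by omega
  have h0 : ((u : ZMod q) ^ 2 + (u : ZMod q) * v + (v : ZMod q) ^ 2) = 0 := by
    have := (ZMod.intCast_zmod_eq_zero_iff_dvd _ q).mpr h
    push_cast at this
    exact this
  have hv : (v : ZMod q) = 0 := by
    by_contra hv
    set t : ZMod q := (u : ZMod q) * (v : ZMod q)⁻¹ with ht
    have hu' : (u : ZMod q) = t * v := by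
      rw [ht, mul_assoc, inv_mul_cancel₀ hv, mul_one]
    have h1 : t ^ 2 + t + 1 = 0 := by
      have : (t ^ 2 + t + 1) * (v : ZMod q) ^ 2 = 0 := by
        rw [hu'] at h0; ring_nf; ring_nf at h0; linear_combination h0
      rcases mul_eq_zero.mp this with h' | h'
      · exact h'
      · exact absurd (pow_eq_zero_iff (two_ne_zero)|>.mp h') hv
    have ht1 : t ≠ 1 := by
      intro he
      rw [he] at h1
      norm_num at h1
      have : ((3 : ℕ) : ZMod q) = 0 := by push_cast; linear_combination h1
      have h3' := (ZMod.natCast_eq_zero_iff 3 q).mp this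
      have := (Nat.prime_dvd_prime_iff_eq hq Nat.prime_three).mp h3'
      omega
    have ht3 : t ^ 3 = 1 := by linear_combination (t - 1) * h1
    have htne : t ≠ 0 := by
      intro he; rw [he] at ht3; simp at ht3
    have hord : orderOf t = 3 := by
      have hdvd : orderOf t ∣ 3 := orderOf_dvd_of_pow_eq_one ht3
      rcases (Nat.prime_three).eq_one_or_self_of_dvd _ hdvd with h' | h'
      · exact absurd (orderOf_eq_one_iff.mp h') ht1
      · exact h'
    have hdvd : orderOf t ∣ q - 1 :=
      orderOf_dvd_of_pow_eq_one (ZMod.pow_card_sub_one_eq_one htne)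
    rw [hord] at hdvd
    have hq2 := hq.two_le
    omega
  have hu : (u : ZMod q) = 0 := by
    have h2 : (u : ZMod q) ^ 2 = 0 := by rw [hv] at h0; linear_combination h0
    exact pow_eq_zero_iff two_ne_zero |>.mp h2
  exact ⟨(ZMod.intCast_zmod_eq_zero_iff_dvd _ q).mp hu,
    (ZMod.intCast_zmod_eq_zero_iff_dvd _ q).mp hv⟩

/-- Multiplicativity of the form u²+uv+v². -/
lemma mul3 {m n : ℤ} (hm : ∃ u v : ℤ, m = u ^ 2 + u * v + v ^ 2)
    (hn : ∃ u v : ℤ, n = u ^ 2 + u * v + v ^ 2) :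
    ∃ u v : ℤ, m * n = u ^ 2 + u * v + v ^ 2 := by
  obtain ⟨u, v, rfl⟩ := hm
  obtain ⟨x, y, rfl⟩ := hn
  exact ⟨u * x - v * y, u * y + v * x + v * y, by ring⟩

/-- Forward direction of the Φ₃ characterization: even valuation at primes ≡ 2 mod 3. -/
lemma evenval3 : ∀ n : ℕ, ∀ u v : ℤ, (n : ℤ) = u ^ 2 + u * v + v ^ 2 →
    ∀ q : ℕ, q.Prime → q % 3 = 2 → Even (padicValNat q n) := by
  intro n
  induction n using Nat.strong_induction_on with
  | _ n ih =>
    intro u v hrep q hq h3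
    haveI : Fact q.Prime := ⟨hq⟩
    rcases Nat.eq_zero_or_pos n with rfl | hn
    · simp
    by_cases hdvd : q ∣ n
    · obtain ⟨hu, hv⟩ := key3 q hq h3 u v (hrep ▸ Int.natCast_dvd_natCast.mpr hdvd)
      obtain ⟨u₁, rfl⟩ := hu
      obtain ⟨v₁, rfl⟩ := hv
      have hq2 : (q : ℤ) ^ 2 ∣ (n : ℤ) := ⟨u₁ ^ 2 + u₁ * v₁ + v₁ ^ 2, by linear_combination hrep⟩
      have hq2n : q ^ 2 ∣ n := by
        have := Int.natCast_dvd_natCast.mp (by push_cast; exact hq2)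
        exact this
      obtain ⟨m, hm⟩ := hq2n
      have hq1 : 1 < q := hq.one_lt
      have hmn : m < n := by
        rcases Nat.eq_zero_or_pos m with rfl | hm0
        · omega
        · have h4 : 4 ≤ q ^ 2 := by nlinarith
          calc m < 4 * m := by omega
            _ ≤ q ^ 2 * m := Nat.mul_le_mul_right m h4
            _ = n := hm.symm
      have hmrep : (m : ℤ) = u₁ ^ 2 + u₁ * v₁ + v₁ ^ 2 := by
        have hq0 : (q : ℤ) ^ 2 ≠ 0 := by positivity
        have : (q : ℤ) ^ 2 * m = (q : ℤ) ^ 2 * (u₁ ^ 2 + u₁ * v₁ + v₁ ^ 2) := by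
          push_cast [hm] at hrep ⊢; linear_combination hrep
        exact mul_left_cancel₀ hq0 this
      have hm0 : m ≠ 0 := fun h => by rw [h, mul_zero] at hm; omega
      have := ih m hmn u₁ v₁ hmrep q hq h3
      rw [hm, padicValNat.mul (by positivity) hm0, padicValNat.prime_pow]
      exact even_two.add this
    · rw [padicValNat.eq_zero_of_not_dvd hdvd]
      exact Even.zero

set_option maxHeartbeats 1000000 in
lemma prime_rep3 (p : ℕ) (hp : p.Prime) (h1 : p % 3 = 1) :
    ∃ u v : ℤ, (p : ℤ) = u ^ 2 + u * v + v ^ 2 := by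
  haveI : Fact p.Prime := ⟨hp⟩
  have hp2 : 2 ≤ p := hp.two_le
  -- find ζ with ζ² + ζ + 1 = 0
  obtain ⟨k, hk⟩ : 3 ∣ p - 1 := by omega
  have hk0 : 0 < k := by omega
  obtain ⟨g, hg⟩ := IsCyclic.exists_generator (α := (ZMod p)ˣ)
  have hordg : orderOf g = p - 1 := by
    rw [orderOf_eq_card_of_forall_mem_zpowers hg, Nat.card_eq_fintype_card,
      ZMod.card_units_eq_totient, Nat.totient_prime hp]
  have hordt : orderOf (g ^ k) = 3 := by
    rw [orderOf_pow, hordg, hk, Nat.gcd_eq_right ⟨3, by ring⟩, Nat.mul_div_cancel _ hk0]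
  set ζ : ZMod p := ((g ^ k : (ZMod p)ˣ) : ZMod p) with hζdef
  have hζ3 : ζ ^ 3 = 1 := by
    have := pow_orderOf_eq_one (g ^ k)
    rw [hordt] at this
    rw [hζdef, ← Units.val_pow_eq_pow_val, this, Units.val_one]
  have hζ1 : ζ ≠ 1 := by
    intro h
    have h' : (g ^ k) = 1 := Units.ext h
    have := orderOf_eq_one_iff.mpr h'
    omega
  have hζ : ζ ^ 2 + ζ + 1 = 0 := by
    have h0 : (ζ - 1) * (ζ ^ 2 + ζ + 1) = 0 := by linear_combination hζ3
    rcases mul_eq_zero.mp h0 with h | h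
    · exact absurd (by linear_combination h) hζ1
    · exact h
  -- pigeonhole
  set m := Nat.sqrt p with hmdef
  have hmp : m ^ 2 < p := by
    have hle : m ^ 2 ≤ p := by rw [hmdef]; exact Nat.sqrt_le' p
    rcases lt_or_eq_of_le hle with h | h
    · exact h
    · exfalso
      have hdvd : m ∣ p := ⟨m, by rw [← h]; ring⟩
      rcases hp.eq_one_or_self_of_dvd m hdvd with h' | h'
      · rw [h'] at h; omega
      · rw [h'] at h; nlinarith
  have hcard2 : p < ((Finset.range (m + 1)) ×ˢ (Finset.range (m + 1))).card := by
    rw [Finset.card_product, Finset.card_range]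
    have h := Nat.lt_succ_sqrt' p
    rw [← hmdef] at h
    nlinarith
  have hlt : (Finset.univ : Finset (ZMod p)).card <
      ((Finset.range (m + 1)) ×ˢ (Finset.range (m + 1))).card := by
    rw [Finset.card_univ, ZMod.card]; exact hcard2
  have hmaps : ∀ a ∈ (Finset.range (m + 1)) ×ˢ (Finset.range (m + 1)),
      (((a.1 : ℕ) : ZMod p) - ζ * ((a.2 : ℕ) : ZMod p)) ∈ (Finset.univ : Finset (ZMod p)) :=
    fun a _ => Finset.mem_univ _
  obtain ⟨x, hmem1, y, hmem2, hne, heq⟩ :=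
    Finset.exists_ne_map_eq_of_card_lt_of_maps_to hlt hmaps
  obtain ⟨a₁, b₁⟩ := x
  obtain ⟨a₂, b₂⟩ := y
  simp only [Finset.mem_product, Finset.mem_range] at hmem1 hmem2
  obtain ⟨u, hudef⟩ : ∃ u : ℤ, u = (a₁ : ℤ) - a₂ := ⟨_, rfl⟩
  obtain ⟨v, hvdef⟩ : ∃ v : ℤ, v = (b₁ : ℤ) - b₂ := ⟨_, rfl⟩
  have hcong : ((u : ℤ) : ZMod p) = ζ * ((v : ℤ) : ZMod p) := by
    rw [hudef, hvdef]
    push_cast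
    linear_combination heq
  have hne0 : ¬(u = 0 ∧ v = 0) := by
    rintro ⟨hu0, hv0⟩
    rw [hudef] at hu0; rw [hvdef] at hv0
    apply hne
    have h1 : a₁ = a₂ := by omega
    have h2 : b₁ = b₂ := by omega
    simp [h1, h2]
  obtain ⟨N, hNdef⟩ : ∃ N : ℤ, N = u ^ 2 + u * v + v ^ 2 := ⟨_, rfl⟩
  have hNdvd : (p : ℤ) ∣ N := by
    rw [← ZMod.intCast_zmod_eq_zero_iff_dvd, hNdef]
    push_cast
    rw [hcong]
    linear_combination ((v : ℤ) : ZMod p) ^ 2 * hζ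
  have hubound : u ^ 2 ≤ (m : ℤ) ^ 2 := by
    have h1 : (a₁ : ℤ) ≤ m := by exact_mod_cast Nat.lt_succ_iff.mp hmem1.1
    have h2 : (a₂ : ℤ) ≤ m := by exact_mod_cast Nat.lt_succ_iff.mp hmem2.1
    have h3 : (0 : ℤ) ≤ a₁ := Int.natCast_nonneg _
    have h4 : (0 : ℤ) ≤ a₂ := Int.natCast_nonneg _
    rw [hudef]; nlinarith
  have hvbound : v ^ 2 ≤ (m : ℤ) ^ 2 := by
    have h1 : (b₁ : ℤ) ≤ m := by exact_mod_cast Nat.lt_succ_iff.mp hmem1.2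
    have h2 : (b₂ : ℤ) ≤ m := by exact_mod_cast Nat.lt_succ_iff.mp hmem2.2
    have h3 : (0 : ℤ) ≤ b₁ := Int.natCast_nonneg _
    have h4 : (0 : ℤ) ≤ b₂ := Int.natCast_nonneg _
    rw [hvdef]; nlinarith
  have hNpos : 0 < N := by
    rcases eq_or_ne v 0 with hv | hv
    · have hu : u ≠ 0 := fun h => hne0 ⟨h, hv⟩
      have h0 : 0 < u ^ 2 := by rcases hu.lt_or_gt with h | h <;> nlinarith
      rw [hNdef, hv]; nlinarith
    · have h1 : 1 ≤ v ^ 2 := by rcases hv.lt_or_gt with h | h <;> nlinarith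
      rw [hNdef]; nlinarith [sq_nonneg (2 * u + v)]
  have hNlt : N < 3 * p := by
    have hm2 : (m : ℤ) ^ 2 < p := by exact_mod_cast hmp
    rw [hNdef]; nlinarith [sq_nonneg (u - v), sq_nonneg (u + v)]
  obtain ⟨c, hc⟩ := hNdvd
  have hp0 : (0 : ℤ) < p := by exact_mod_cast hp.pos
  have hc12 : c = 1 ∨ c = 2 := by
    have h0 : 0 < c := by nlinarith
    have h3 : c < 3 := by nlinarith
    omega
  rcases hc12 with rfl | rfl
  · exact ⟨u, v, by rw [← hNdef]; linarith [hc]⟩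
  · exfalso
    have h2N : ((2 : ℕ) : ℤ) ∣ u ^ 2 + u * v + v ^ 2 := ⟨(p : ℤ), by push_cast; linarith [hc, hNdef.symm.le]⟩
    obtain ⟨hu2, hv2⟩ := key3 2 Nat.prime_two rfl u v h2N
    obtain ⟨u', hu'⟩ := hu2
    obtain ⟨v', hv'⟩ := hv2
    have h4 : (4 : ℤ) ∣ N := ⟨u' ^ 2 + u' * v' + v' ^ 2, by rw [hNdef, hu', hv']; push_cast; ring⟩
    obtain ⟨d, hd⟩ := h4
    have h2p : (2 : ℕ) ∣ p := by
      have : ((2 : ℕ) : ℤ) ∣ (p : ℤ) := ⟨d, by push_cast; linarith [hc, hd]⟩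
      exact_mod_cast Int.natCast_dvd_natCast.mp this
    have := (Nat.prime_dvd_prime_iff_eq Nat.prime_two hp).mp h2p
    omega

/-- value of padicValNat on a product c * m where q doesn't divide c -/
lemma val_aux {q c m : ℕ} (hq : q.Prime) (hc : ¬ q ∣ c) (hc0 : c ≠ 0) (hm0 : m ≠ 0) :
    padicValNat q (c * m) = padicValNat q m := by
  haveI : Fact q.Prime := ⟨hq⟩
  rw [padicValNat.mul hc0 hm0, padicValNat.eq_zero_of_not_dvd hc, zero_add]

lemma rep_of_even3 : ∀ n : ℕ, 0 < n →
    (∀ q : ℕ, q.Prime → q % 3 = 2 → Even (padicValNat q n)) →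
    ∃ u v : ℤ, (n : ℤ) = u ^ 2 + u * v + v ^ 2 := by
  intro n
  induction n using Nat.strong_induction_on with
  | _ n ih =>
    intro hn H
    rcases eq_or_lt_of_le (show 1 ≤ n from hn) with h1 | h1
    · exact ⟨1, 0, by rw [← h1]; norm_num⟩
    set p := n.minFac with hpdef
    have hp : p.Prime := Nat.minFac_prime (by omega)
    haveI : Fact p.Prime := ⟨hp⟩
    have hpn : p ∣ n := Nat.minFac_dvd n
    have hp2 : 2 ≤ p := hp.two_le
    have hcase : p % 3 = 0 ∨ p % 3 = 1 ∨ p % 3 = 2 := by omega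
    rcases hcase with h3 | h3 | h3
    · -- p = 3
      have hp3 : p = 3 := ((Nat.prime_dvd_prime_iff_eq Nat.prime_three hp).mp
        (Nat.dvd_of_mod_eq_zero h3)).symm
      obtain ⟨m, hm⟩ := hpn
      have hm0 : m ≠ 0 := by rintro rfl; omega
      have hmlt : m < n := by
        have : n = p * m := hm
        nlinarith [Nat.pos_of_ne_zero hm0]
      have Hm : ∀ q : ℕ, q.Prime → q % 3 = 2 → Even (padicValNat q m) := by
        intro q hq hq3
        have hqp : ¬ q ∣ p := by
          rw [hp3]
          intro hd
          have := (Nat.prime_dvd_prime_iff_eq hq Nat.prime_three).mp hd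
          omega
        have := H q hq hq3
        rwa [hm, val_aux hq hqp (by omega) hm0] at this
      obtain ⟨u, v, huv⟩ := ih m hmlt (Nat.pos_of_ne_zero hm0) Hm
      have h3rep : ∃ u v : ℤ, ((p : ℕ) : ℤ) = u ^ 2 + u * v + v ^ 2 :=
        ⟨1, 1, by rw [hp3]; norm_num⟩
      obtain ⟨U, V, hUV⟩ := mul3 h3rep ⟨u, v, huv⟩
      exact ⟨U, V, by rw [hm]; push_cast; push_cast at hUV; linarith⟩
    · -- p % 3 = 1
      obtain ⟨m, hm⟩ := hpn
      have hm0 : m ≠ 0 := by rintro rfl; omega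
      have hmlt : m < n := by nlinarith [Nat.pos_of_ne_zero hm0, hm]
      have Hm : ∀ q : ℕ, q.Prime → q % 3 = 2 → Even (padicValNat q m) := by
        intro q hq hq3
        have hqp : ¬ q ∣ p := by
          intro hd
          have := (Nat.prime_dvd_prime_iff_eq hq hp).mp hd
          omega
        have := H q hq hq3
        rwa [hm, val_aux hq hqp (by omega) hm0] at this
      obtain ⟨u, v, huv⟩ := ih m hmlt (Nat.pos_of_ne_zero hm0) Hm
      obtain ⟨U, V, hUV⟩ := mul3 (prime_rep3 p hp h3) ⟨u, v, huv⟩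
      exact ⟨U, V, by rw [hm]; push_cast; push_cast at hUV; linarith⟩
    · -- p % 3 = 2 : p² divides n
      have hval : 1 ≤ padicValNat p n := one_le_padicValNat_of_dvd (by omega) hpn
      have heven := H p hp h3
      have hval2 : 2 ≤ padicValNat p n := by
        rcases heven with ⟨r, hr⟩; omega
      have hp2dvd : p ^ 2 ∣ n := dvd_trans (pow_dvd_pow p hval2) pow_padicValNat_dvd
      obtain ⟨m, hm⟩ := hp2dvd
      have hm0 : m ≠ 0 := fun h => by rw [h, mul_zero] at hm; omega
      have hmlt : m < n := by
        have h4 : 4 ≤ p ^ 2 := by nlinarith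
        calc m < 4 * m := by have := Nat.pos_of_ne_zero hm0; omega
          _ ≤ p ^ 2 * m := Nat.mul_le_mul_right m h4
          _ = n := hm.symm
      have Hm : ∀ q : ℕ, q.Prime → q % 3 = 2 → Even (padicValNat q m) := by
        intro q hq hq3
        haveI : Fact q.Prime := ⟨hq⟩
        by_cases hqp : q = p
        · rw [hqp]
          have hthis := H p hp h3
          rw [hm, padicValNat.mul (by positivity) hm0, padicValNat.prime_pow] at hthis
          rcases hthis with ⟨r, hr⟩
          exact ⟨r - 1, by omega⟩
        · have hqd : ¬ q ∣ p ^ 2 := by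
            intro hd
            exact hqp ((Nat.prime_dvd_prime_iff_eq hq hp).mp (hq.dvd_of_dvd_pow hd))
          have := H q hq hq3
          rwa [hm, val_aux hq hqd (by positivity) hm0] at this
      obtain ⟨u, v, huv⟩ := ih m hmlt (Nat.pos_of_ne_zero hm0) Hm
      have hsq : ∃ a b : ℤ, ((p ^ 2 : ℕ) : ℤ) = a ^ 2 + a * b + b ^ 2 :=
        ⟨(p : ℤ), 0, by push_cast; ring⟩
      obtain ⟨U, V, hUV⟩ := mul3 hsq ⟨u, v, huv⟩
      exact ⟨U, V, by rw [hm]; push_cast at hUV ⊢; linarith⟩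

lemma peel_sq {C : ℕ → Prop} {n p m : ℕ} (hp : p.Prime) (hm : n = p ^ 2 * m) (hm0 : m ≠ 0)
    (hev : Even (padicValNat p n))
    (H : ∀ q : ℕ, q.Prime → C q → Even (padicValNat q n)) :
    ∀ q : ℕ, q.Prime → C q → Even (padicValNat q m) := by
  intro q hq hc
  haveI : Fact q.Prime := ⟨hq⟩
  haveI : Fact p.Prime := ⟨hp⟩
  by_cases hqp : q = p
  · subst hqp
    rw [hm, padicValNat.mul (pow_ne_zero 2 hp.pos.ne') hm0, padicValNat.prime_pow] at hev
    rcases hev with ⟨r, hr⟩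
    exact ⟨r - 1, by omega⟩
  · have hH := H q hq hc
    have hqd : ¬ q ∣ p ^ 2 := fun hd =>
      hqp ((Nat.prime_dvd_prime_iff_eq hq hp).mp (hq.dvd_of_dvd_pow hd))
    rwa [hm, val_aux hq hqd (pow_ne_zero 2 hp.pos.ne') hm0] at hH

lemma peel_one {C : ℕ → Prop} {n p m : ℕ} (hp : p.Prime) (hm : n = p * m) (hm0 : m ≠ 0)
    (hC : ¬ C p) (H : ∀ q : ℕ, q.Prime → C q → Even (padicValNat q n)) :
    ∀ q : ℕ, q.Prime → C q → Even (padicValNat q m) := by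
  intro q hq hc
  haveI : Fact q.Prime := ⟨hq⟩
  by_cases hqp : q = p
  · exact absurd (hqp ▸ hc) hC
  · have hH := H q hq hc
    have hqd : ¬ q ∣ p := fun hd => hqp ((Nat.prime_dvd_prime_iff_eq hq hp).mp hd)
    rwa [hm, val_aux hq hqd hp.pos.ne' hm0] at hH

/-- get `p^2 ∣ n` from `p ∣ n`, `0 < n` and even valuation -/
lemma sq_dvd_of_even_val {n p : ℕ} (hp : p.Prime) (hn : 0 < n) (hpn : p ∣ n)
    (hev : Even (padicValNat p n)) : p ^ 2 ∣ n := by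
  haveI : Fact p.Prime := ⟨hp⟩
  have h1 : 1 ≤ padicValNat p n := one_le_padicValNat_of_dvd hn.ne' hpn
  have h2 : 2 ≤ padicValNat p n := by rcases hev with ⟨r, hr⟩; omega
  exact dvd_trans (pow_dvd_pow p h2) pow_padicValNat_dvd

lemma decompose : ∀ n : ℕ, 0 < n →
    (∀ q : ℕ, q.Prime → q % 3 = 2 → Even (padicValNat q n)) →
    (∀ q : ℕ, q.Prime → q % 4 = 3 → Even (padicValNat q n)) →
    ∃ a b N5 N7 N11 N1 : ℕ, 0 < N5 ∧ 0 < N7 ∧ 0 < N11 ∧ 0 < N1 ∧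
      (∀ p : ℕ, p.Prime → p ∣ N5 → p % 12 = 5) ∧
      (∀ p : ℕ, p.Prime → p ∣ N7 → p % 12 = 7) ∧
      (∀ p : ℕ, p.Prime → p ∣ N11 → p % 12 = 11) ∧
      (∀ p : ℕ, p.Prime → p ∣ N1 → p % 12 = 1) ∧
      n = (2 ^ a * 3 ^ b * N5 * N7 * N11) ^ 2 * N1 := by
  intro n
  induction n using Nat.strong_induction_on with
  | _ n ih =>
    intro hn H3 H4
    rcases eq_or_lt_of_le (show 1 ≤ n from hn) with h1 | h1
    · refine ⟨0, 0, 1, 1, 1, 1, one_pos, one_pos, one_pos, one_pos, ?_, ?_, ?_, ?_, by omega⟩ <;>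
        exact fun p hp hd => absurd (Nat.dvd_one.mp hd) hp.one_lt.ne'
    obtain ⟨p, hpdef⟩ : ∃ p, p = n.minFac := ⟨_, rfl⟩
    have hp : p.Prime := hpdef ▸ Nat.minFac_prime (by omega)
    have hpn : p ∣ n := hpdef ▸ Nat.minFac_dvd n
    have hp2 : 2 ≤ p := hp.two_le
    -- helper for the even-exponent cases
    have main_sq : Even (padicValNat p n) → ∀ N : ℕ,
        (∃ m, n = p ^ 2 * m ∧ m ≠ 0 ∧ m < n ∧
          (∀ q : ℕ, q.Prime → q % 3 = 2 → Even (padicValNat q m)) ∧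
          (∀ q : ℕ, q.Prime → q % 4 = 3 → Even (padicValNat q m))) → True := fun _ _ _ => trivial
    clear main_sq
    have mk_m_sq : Even (padicValNat p n) →
        ∃ m, n = p ^ 2 * m ∧ m ≠ 0 ∧ m < n ∧
          (∀ q : ℕ, q.Prime → q % 3 = 2 → Even (padicValNat q m)) ∧
          (∀ q : ℕ, q.Prime → q % 4 = 3 → Even (padicValNat q m)) := by
      intro hev
      obtain ⟨m, hm⟩ := sq_dvd_of_even_val hp (by omega) hpn hev
      have hm0 : m ≠ 0 := fun h => by rw [h, mul_zero] at hm; omega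
      have hmlt : m < n := by
        have h4 : 4 ≤ p ^ 2 := by nlinarith
        calc m < 4 * m := by have := Nat.pos_of_ne_zero hm0; omega
          _ ≤ p ^ 2 * m := Nat.mul_le_mul_right m h4
          _ = n := hm.symm
      exact ⟨m, hm, hm0, hmlt, peel_sq hp hm hm0 hev H3, peel_sq hp hm hm0 hev H4⟩
    by_cases hp2' : p = 2
    · obtain ⟨m, hm, hm0, hmlt, Hm3, Hm4⟩ := mk_m_sq (H3 p hp (by omega))
      obtain ⟨a, b, N5, N7, N11, N1, p5, p7, p11, p1, c5, c7, c11, c1, heq⟩ :=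
        ih m hmlt (Nat.pos_of_ne_zero hm0) Hm3 Hm4
      exact ⟨a + 1, b, N5, N7, N11, N1, p5, p7, p11, p1, c5, c7, c11, c1,
        by rw [hm, heq, hp2']; ring⟩
    by_cases hp3' : p = 3
    · obtain ⟨m, hm, hm0, hmlt, Hm3, Hm4⟩ := mk_m_sq (H4 p hp (by omega))
      obtain ⟨a, b, N5, N7, N11, N1, p5, p7, p11, p1, c5, c7, c11, c1, heq⟩ :=
        ih m hmlt (Nat.pos_of_ne_zero hm0) Hm3 Hm4
      exact ⟨a, b + 1, N5, N7, N11, N1, p5, p7, p11, p1, c5, c7, c11, c1,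
        by rw [hm, heq, hp3']; ring⟩
    -- p coprime to 12
    have hodd : ¬ 2 ∣ p := fun hd => hp2' ((Nat.prime_dvd_prime_iff_eq Nat.prime_two hp).mp hd).symm
    have h3nd : ¬ 3 ∣ p := fun hd => hp3' ((Nat.prime_dvd_prime_iff_eq Nat.prime_three hp).mp hd).symm
    have h12 : p % 12 = 1 ∨ p % 12 = 5 ∨ p % 12 = 7 ∨ p % 12 = 11 := by omega
    rcases h12 with h12 | h12 | h12 | h12
    · -- p ≡ 1 mod 12 : peel a single p into N1
      obtain ⟨m, hm⟩ := hpn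
      have hm0 : m ≠ 0 := fun h => by rw [h, mul_zero] at hm; omega
      have hmlt : m < n := by
        calc m < 2 * m := by have := Nat.pos_of_ne_zero hm0; omega
          _ ≤ p * m := Nat.mul_le_mul_right m hp2
          _ = n := hm.symm
      have Hm3 := peel_one hp hm hm0 (C := fun q => q % 3 = 2) (by omega) H3
      have Hm4 := peel_one hp hm hm0 (C := fun q => q % 4 = 3) (by omega) H4
      obtain ⟨a, b, N5, N7, N11, N1, p5, p7, p11, p1, c5, c7, c11, c1, heq⟩ :=
        ih m hmlt (Nat.pos_of_ne_zero hm0) Hm3 Hm4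
      refine ⟨a, b, N5, N7, N11, N1 * p, p5, p7, p11, Nat.mul_pos p1 (by omega), c5, c7, c11,
        ?_, by rw [hm, heq]; ring⟩
      intro q hq hd
      rcases (Nat.Prime.dvd_mul hq).mp hd with hd' | hd'
      · exact c1 q hq hd'
      · rw [(Nat.prime_dvd_prime_iff_eq hq hp).mp hd']; exact h12
    · -- p ≡ 5 mod 12
      obtain ⟨m, hm, hm0, hmlt, Hm3, Hm4⟩ := mk_m_sq (H3 p hp (by omega))
      obtain ⟨a, b, N5, N7, N11, N1, p5, p7, p11, p1, c5, c7, c11, c1, heq⟩ :=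
        ih m hmlt (Nat.pos_of_ne_zero hm0) Hm3 Hm4
      refine ⟨a, b, N5 * p, N7, N11, N1, Nat.mul_pos p5 (by omega), p7, p11, p1, ?_, c7, c11, c1,
        by rw [hm, heq]; ring⟩
      intro q hq hd
      rcases (Nat.Prime.dvd_mul hq).mp hd with hd' | hd'
      · exact c5 q hq hd'
      · rw [(Nat.prime_dvd_prime_iff_eq hq hp).mp hd']; exact h12
    · -- p ≡ 7 mod 12
      obtain ⟨m, hm, hm0, hmlt, Hm3, Hm4⟩ := mk_m_sq (H4 p hp (by omega))
      obtain ⟨a, b, N5, N7, N11, N1, p5, p7, p11, p1, c5, c7, c11, c1, heq⟩ :=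
        ih m hmlt (Nat.pos_of_ne_zero hm0) Hm3 Hm4
      refine ⟨a, b, N5, N7 * p, N11, N1, p5, Nat.mul_pos p7 (by omega), p11, p1, c5, ?_, c11, c1,
        by rw [hm, heq]; ring⟩
      intro q hq hd
      rcases (Nat.Prime.dvd_mul hq).mp hd with hd' | hd'
      · exact c7 q hq hd'
      · rw [(Nat.prime_dvd_prime_iff_eq hq hp).mp hd']; exact h12
    · -- p ≡ 11 mod 12
      obtain ⟨m, hm, hm0, hmlt, Hm3, Hm4⟩ := mk_m_sq (H3 p hp (by omega))
      obtain ⟨a, b, N5, N7, N11, N1, p5, p7, p11, p1, c5, c7, c11, c1, heq⟩ :=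
        ih m hmlt (Nat.pos_of_ne_zero hm0) Hm3 Hm4
      refine ⟨a, b, N5, N7, N11 * p, N1, p5, p7, Nat.mul_pos p11 (by omega), p1, c5, c7, ?_, c1,
        by rw [hm, heq]; ring⟩
      intro q hq hd
      rcases (Nat.Prime.dvd_mul hq).mp hd with hd' | hd'
      · exact c11 q hq hd'
      · rw [(Nat.prime_dvd_prime_iff_eq hq hp).mp hd']; exact h12

theorem stmt18 (n : ℕ) (hn : 1 ≤ n) :
    ((∃ u v : ℤ, (n : ℤ) = u ^ 2 + u * v + v ^ 2) ∧
      (∃ x y : ℤ, (n : ℤ) = x ^ 2 + y ^ 2)) ↔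
    ∃ a b N5 N7 N11 N1 : ℕ, 0 < N5 ∧ 0 < N7 ∧ 0 < N11 ∧ 0 < N1 ∧
      (∀ p : ℕ, p.Prime → p ∣ N5 → p % 12 = 5) ∧
      (∀ p : ℕ, p.Prime → p ∣ N7 → p % 12 = 7) ∧
      (∀ p : ℕ, p.Prime → p ∣ N11 → p % 12 = 11) ∧
      (∀ p : ℕ, p.Prime → p ∣ N1 → p % 12 = 1) ∧
      n = (2 ^ a * 3 ^ b * N5 * N7 * N11) ^ 2 * N1 := by
  constructor
  · rintro ⟨⟨u, v, huv⟩, ⟨x, y, hxy⟩⟩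
    have H3 : ∀ q : ℕ, q.Prime → q % 3 = 2 → Even (padicValNat q n) :=
      evenval3 n u v huv
    have hnatrep : ∃ x' y' : ℕ, n = x' ^ 2 + y' ^ 2 := by
      refine ⟨x.natAbs, y.natAbs, ?_⟩
      have h := hxy
      zify
      rw [sq_abs, sq_abs]
      exact h
    have H4 : ∀ q : ℕ, q.Prime → q % 4 = 3 → Even (padicValNat q n) :=
      fun q hq h4 => by
        by_cases hd : q ∣ n
        · exact Nat.eq_sq_add_sq_iff.mp hnatrep q (Nat.mem_primeFactors.mpr ⟨hq, hd, by omega⟩) h4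
        · rw [padicValNat.eq_zero_of_not_dvd hd]; exact Even.zero
    exact decompose n hn H3 H4
  · rintro ⟨a, b, N5, N7, N11, N1, p5, p7, p11, p1, c5, c7, c11, c1, heq⟩
    obtain ⟨K, hKdef⟩ : ∃ K : ℕ, K = 2 ^ a * 3 ^ b * N5 * N7 * N11 := ⟨_, rfl⟩
    rw [← hKdef] at heq
    have hN1_3 : ∀ q : ℕ, q.Prime → q % 3 = 2 → Even (padicValNat q N1) := by
      intro q hq h2
      have hnd : ¬ q ∣ N1 := fun hd => by have := c1 q hq hd; omega
      rw [padicValNat.eq_zero_of_not_dvd hnd]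
      exact Even.zero
    have hN1_4 : ∃ x' y' : ℕ, N1 = x' ^ 2 + y' ^ 2 := by
      rw [Nat.eq_sq_add_sq_iff]
      intro q hq h4
      have hnd : ¬ q ∣ N1 := fun hd => by have := c1 q (Nat.prime_of_mem_primeFactors hq) hd; omega
      rw [padicValNat.eq_zero_of_not_dvd hnd]
      exact Even.zero
    constructor
    · obtain ⟨u, v, huv⟩ := mul3 (m := ((K : ℤ)) ^ 2) ⟨(K : ℤ), 0, by ring⟩
        (rep_of_even3 N1 p1 hN1_3)
      exact ⟨u, v, by rw [heq]; push_cast; linarith [huv]⟩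
    · obtain ⟨x', y', hxy⟩ := hN1_4
      exact ⟨K * x', K * y', by rw [heq, hxy]; push_cast; ring⟩
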